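/- For every integer k ≥ 3 there exists a polynomial P in two variables over ℚ of total degree at most k−2 such that for all natural numbers m ≤ n: (ω_{n,m,k} : ℚ) = (n−2m)^k / k! − n·(n−2m)^{k−2} / (2·(k−2)!) + P(n,m), where n−2m is computed in ℚ. -/

import Mathlib

open Finset Filter

attribute [local instance] Classical.propDecidable

/-- `ω_{n,m,k} = ∑_{s=0}^{k} (−1)^s C(m,s) C(n−m,k−s)`. -/
def omegaW (n m k : ℕ) : ℤ :=
  ∑ s ∈ Finset.range (k + 1), (-1 : ℤ) ^ s * (m.choose s : ℤ) * ((n - m).choose (k - s) : ℤ)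

namespace OmwAux
open Polynomial MvPolynomial Finset

local notation "Xp" => Polynomial.X
local notation "Xm" => MvPolynomial.X

lemma poch_decomp (r : ℕ) : ∃ e : Polynomial ℚ,
    descPochhammer ℚ r = Xp ^ r - Polynomial.C (r.choose 2 : ℚ) * Xp ^ (r - 1) + e ∧
      e.degree + 2 ≤ (r : WithBot ℕ) := by
  induction r with
  | zero => exact ⟨0, by simp [descPochhammer_zero], by simp⟩
  | succ r ih =>
    rcases Nat.eq_zero_or_pos r with rfl | hr
    · exact ⟨0, by simp [descPochhammer_one], by simp⟩
    obtain ⟨e, he, hd⟩ := ih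
    refine ⟨Polynomial.C ((r.choose 2 : ℚ) * r) * Xp ^ (r - 1) + e * (Xp - Polynomial.C (r : ℚ)), ?_, ?_⟩
    · rw [descPochhammer_succ_right, he]
      have h1 : (Xp : ℚ[X]) ^ (r - 1) * Xp = Xp ^ r := by
        rw [← pow_succ]; congr 1; omega
      have hx : (Xp : ℚ[X]) ^ r * Xp = Xp ^ (r + 1) := (pow_succ Xp r).symm
      have h2 : ((r+1).choose 2 : ℚ) = (r.choose 2 : ℚ) + r := by
        rw [Nat.choose_succ_succ]
        push_cast [Nat.choose_one_right]
        ring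
      have h3 : r + 1 - 1 = r := by omega
      rw [h3, ← C_eq_natCast, h2, Polynomial.C_add, Polynomial.C_mul]
      linear_combination hx - Polynomial.C ((r.choose 2 : ℚ)) * h1
    · have h4 : Polynomial.degree (Polynomial.C ((r.choose 2 : ℚ) * r) * Xp ^ (r - 1)) ≤ ((r - 1 : ℕ) : WithBot ℕ) :=
        degree_C_mul_X_pow_le _ _
      have h5 : Polynomial.degree (e * (Xp - Polynomial.C (r:ℚ))) = degree e + 1 := by
        rw [degree_mul, degree_X_sub_C]
      have hmax := degree_add_le (Polynomial.C ((r.choose 2 : ℚ) * r) * Xp ^ (r - 1)) (e * (Xp - Polynomial.C (r:ℚ)))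
      have hb1 : Polynomial.degree (Polynomial.C ((r.choose 2 : ℚ) * r) * Xp ^ (r - 1)) + 2 ≤ ((r + 1 : ℕ) : WithBot ℕ) := by
        refine le_trans (add_le_add h4 (le_refl 2)) ?_
        have h6 : ((r-1:ℕ) : WithBot ℕ) + 2 = (((r-1)+2 : ℕ) : WithBot ℕ) := by push_cast; ring
        rw [h6, show (r-1)+2 = r+1 by omega]
      have hb2 : Polynomial.degree (e * (Xp - Polynomial.C (r:ℚ))) + 2 ≤ ((r + 1 : ℕ) : WithBot ℕ) := by
        rw [h5]
        calc degree e + 1 + 2 = degree e + 2 + 1 := by ring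
          _ ≤ (r : WithBot ℕ) + 1 := add_le_add hd (le_refl 1)
          _ = ((r+1:ℕ) : WithBot ℕ) := by push_cast; ring
      refine le_trans (add_le_add hmax (le_refl 2)) ?_
      rcases max_cases (Polynomial.degree (Polynomial.C ((r.choose 2 : ℚ) * r) * Xp ^ (r - 1))) (Polynomial.degree (e * (Xp - Polynomial.C (r:ℚ)))) with ⟨h,_⟩|⟨h,_⟩ <;> rw [h]
      · exact hb1
      · exact hb2

lemma aeval_totalDegree_le (L : MvPolynomial (Fin 2) ℚ) (hL : L.totalDegree ≤ 1)
    (p : ℚ[X]) : (Polynomial.aeval L p).totalDegree ≤ p.natDegree := by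
  rw [Polynomial.aeval_eq_sum_range]
  refine le_trans (MvPolynomial.totalDegree_finset_sum _ _) ?_
  refine Finset.sup_le fun i hi => ?_
  refine le_trans (MvPolynomial.totalDegree_smul_le _ _) ?_
  refine le_trans (MvPolynomial.totalDegree_pow _ _) ?_
  have := Finset.mem_range.mp hi
  calc i * L.totalDegree ≤ i * 1 := Nat.mul_le_mul_left i hL
    _ ≤ p.natDegree := by omega

noncomputable def ee (r : ℕ) : ℚ[X] := (poch_decomp r).choose

lemma ee_spec (r : ℕ) : descPochhammer ℚ r =
    Xp ^ r - Polynomial.C (r.choose 2 : ℚ) * Xp ^ (r - 1) + ee r :=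
  (poch_decomp r).choose_spec.1

lemma ee_deg (r : ℕ) : (ee r).degree + 2 ≤ (r : WithBot ℕ) := (poch_decomp r).choose_spec.2

lemma ee_natDegree (r : ℕ) : (ee r).natDegree ≤ r - 2 := by
  by_cases h : ee r = 0
  · simp [h]
  · have h1 := ee_deg r
    rw [Polynomial.degree_eq_natDegree h] at h1
    have h2 : ((ee r).natDegree + 2 : ℕ) ≤ (r : ℕ) := by exact_mod_cast h1
    omega

lemma ee_zero {r : ℕ} (h : r ≤ 1) : ee r = 0 := by
  by_contra hne
  have h1 := ee_deg r
  rw [Polynomial.degree_eq_natDegree hne] at h1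
  have h2 : ((ee r).natDegree + 2 : ℕ) ≤ (r : ℕ) := by exact_mod_cast h1
  omega

noncomputable def wq (k s : ℕ) : ℚ := (-1)^s / (s.factorial * (k-s).factorial)
noncomputable def A1 (s : ℕ) : MvPolynomial (Fin 2) ℚ := (Xm 1)^s
noncomputable def A2 (s : ℕ) : MvPolynomial (Fin 2) ℚ :=
  -(MvPolynomial.C (s.choose 2 : ℚ)) * (Xm 1)^(s-1)
noncomputable def A3 (s : ℕ) : MvPolynomial (Fin 2) ℚ :=
  Polynomial.aeval (Xm 1 : MvPolynomial (Fin 2) ℚ) (ee s)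
noncomputable def B1 (k s : ℕ) : MvPolynomial (Fin 2) ℚ := (Xm 0 - Xm 1)^(k-s)
noncomputable def B2 (k s : ℕ) : MvPolynomial (Fin 2) ℚ :=
  -(MvPolynomial.C ((k-s).choose 2 : ℚ)) * (Xm 0 - Xm 1)^(k-s-1)
noncomputable def B3 (k s : ℕ) : MvPolynomial (Fin 2) ℚ :=
  Polynomial.aeval (Xm 0 - Xm 1 : MvPolynomial (Fin 2) ℚ) (ee (k-s))
noncomputable def GG (k s : ℕ) : MvPolynomial (Fin 2) ℚ :=
  A2 s * B2 k s + A1 s * B3 k s + A2 s * B3 k s + A3 s * B1 k s + A3 s * B2 k s + A3 s * B3 k s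

lemma decompA (s : ℕ) :
    Polynomial.aeval (Xm 1 : MvPolynomial (Fin 2) ℚ) (descPochhammer ℚ s) = A1 s + A2 s + A3 s := by
  rw [ee_spec s]
  simp [A1, A2, A3, sub_eq_add_neg]

lemma decompB (k s : ℕ) :
    Polynomial.aeval (Xm 0 - Xm 1 : MvPolynomial (Fin 2) ℚ) (descPochhammer ℚ (k-s)) =
      B1 k s + B2 k s + B3 k s := by
  rw [ee_spec (k-s)]
  simp [B1, B2, B3, sub_eq_add_neg]

lemma sum1 (k : ℕ) (hk : 3 ≤ k) :
    ∑ s ∈ range (k+1), MvPolynomial.C (wq k s) * (A1 s * B1 k s) =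
      MvPolynomial.C ((k.factorial : ℚ))⁻¹ * (Xm 0 - 2 * Xm 1)^k := by
  have hbin := add_pow (-(Xm 1) : MvPolynomial (Fin 2) ℚ) (Xm 0 - Xm 1) k
  have hXX : (-(Xm 1) : MvPolynomial (Fin 2) ℚ) + (Xm 0 - Xm 1) = Xm 0 - 2 * Xm 1 := by ring
  rw [← hXX, hbin, Finset.mul_sum]
  refine Finset.sum_congr rfl fun s hs => ?_
  have hs' : s ≤ k := by have := Finset.mem_range.mp hs; omega
  have hw : wq k s = (↑k.factorial)⁻¹ * ((-1:ℚ)^s * (k.choose s : ℚ)) := by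
    rw [Nat.cast_choose ℚ hs', wq]
    have h1 : (s.factorial : ℚ) ≠ 0 := Nat.cast_ne_zero.mpr s.factorial_ne_zero
    have h2 : ((k-s).factorial : ℚ) ≠ 0 := Nat.cast_ne_zero.mpr (k-s).factorial_ne_zero
    have h3 : (k.factorial : ℚ) ≠ 0 := Nat.cast_ne_zero.mpr k.factorial_ne_zero
    field_simp
  rw [A1, B1, hw]
  simp only [map_mul, map_pow, map_neg, map_one, map_natCast]
  ring


lemma negpow (sP : ℕ) : ((-(Xm 1)) : MvPolynomial (Fin 2) ℚ)^sP
    = MvPolynomial.C ((-1:ℚ)^sP) * (Xm 1)^sP := by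
  rw [neg_pow, map_pow, map_neg, map_one]

lemma sumB (k : ℕ) (hk : 3 ≤ k) :
    ∑ s ∈ range (k+1), MvPolynomial.C (wq k s) * (A1 s * B2 k s) =
      -(MvPolynomial.C ((2 * ((k-2).factorial) : ℚ))⁻¹) *
        ((Xm 0 - Xm 1) * (Xm 0 - 2 * Xm 1)^(k-2)) := by
  have hsub : Finset.range (k-1) ⊆ Finset.range (k+1) := Finset.range_subset_range.mpr (by omega)
  rw [← Finset.sum_subset hsub ?hz]
  case hz =>
    intro s hs hns
    have h1 : k - 1 ≤ s := by
      have := Finset.mem_range.mp hs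
      simp only [Finset.mem_range, not_lt] at hns
      omega
    have h2 : (k - s).choose 2 = 0 := Nat.choose_eq_zero_of_lt (by omega)
    simp [B2, h2]
  have hXX : (-(Xm 1) : MvPolynomial (Fin 2) ℚ) + (Xm 0 - Xm 1) = Xm 0 - 2 * Xm 1 := by ring
  rw [← hXX, add_pow, show k - 2 + 1 = k - 1 by omega, Finset.mul_sum, Finset.mul_sum]
  refine Finset.sum_congr rfl fun s hs => ?_
  have hs' : s ≤ k - 2 := by have := Finset.mem_range.mp hs; omega
  have key : (MvPolynomial.C (wq k s) * MvPolynomial.C (((k-s).choose 2 : ℚ)) : MvPolynomial (Fin 2) ℚ) =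
      MvPolynomial.C ((2 * ((k-2).factorial) : ℚ))⁻¹ * MvPolynomial.C ((-1:ℚ)^s) *
        MvPolynomial.C (((k-2).choose s : ℚ)) := by
    rw [← map_mul, ← map_mul, ← map_mul]
    congr 1
    rw [Nat.cast_choose ℚ (show 2 ≤ k - s by omega), Nat.cast_choose ℚ hs', wq,
      show k - s - 2 = k - 2 - s by omega, Nat.factorial_two]
    have h1 : (s.factorial : ℚ) ≠ 0 := Nat.cast_ne_zero.mpr s.factorial_ne_zero
    have h2 : (((k-s)).factorial : ℚ) ≠ 0 := Nat.cast_ne_zero.mpr (k-s).factorial_ne_zero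
    have h3 : (((k-2)).factorial : ℚ) ≠ 0 := Nat.cast_ne_zero.mpr (k-2).factorial_ne_zero
    have h4 : (((k-2-s)).factorial : ℚ) ≠ 0 := Nat.cast_ne_zero.mpr (k-2-s).factorial_ne_zero
    field_simp
    ring
  rw [A1, B2, negpow, ← MvPolynomial.C_eq_coe_nat,
    show k - s - 1 = (k - 2 - s) + 1 by omega, pow_succ]
  push_cast
  linear_combination (-((Xm 1)^s * ((Xm 0 - Xm 1)^(k-2-s) * (Xm 0 - Xm 1)))) * key

lemma sumA (k : ℕ) (hk : 3 ≤ k) :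
    ∑ s ∈ range (k+1), MvPolynomial.C (wq k s) * (A2 s * B1 k s) =
      -(MvPolynomial.C ((2 * ((k-2).factorial) : ℚ))⁻¹) *
        (Xm 1 * (Xm 0 - 2 * Xm 1)^(k-2)) := by
  obtain ⟨j, rfl⟩ : ∃ j, k = j + 3 := ⟨k - 3, by omega⟩
  rw [show j + 3 + 1 = (j + 2) + 1 + 1 from rfl]
  rw [Finset.sum_range_succ' _ ((j+2)+1), Finset.sum_range_succ' _ (j+2)]
  have hz0 : MvPolynomial.C (wq (j+3) 0) * (A2 0 * B1 (j+3) 0) = 0 := by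
    simp [A2, show Nat.choose 0 2 = 0 from rfl]
  have hz1 : MvPolynomial.C (wq (j+3) (0+1)) * (A2 (0+1) * B1 (j+3) (0+1)) = 0 := by
    simp [A2, show Nat.choose 1 2 = 0 from rfl]
  rw [hz0, hz1, add_zero, add_zero]
  have hXX : (-(Xm 1) : MvPolynomial (Fin 2) ℚ) + (Xm 0 - Xm 1) = Xm 0 - 2 * Xm 1 := by ring
  rw [← hXX, add_pow, show j + 3 - 2 = j + 1 from rfl, Finset.mul_sum, Finset.mul_sum]
  refine Finset.sum_congr rfl fun i hi => ?_
  have hi' : i ≤ j + 1 := by have := Finset.mem_range.mp hi; omega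
  have key : (MvPolynomial.C (wq (j+3) (i+1+1)) * MvPolynomial.C (((i+2).choose 2 : ℚ)) : MvPolynomial (Fin 2) ℚ) =
      MvPolynomial.C ((2 * ((j+1).factorial) : ℚ))⁻¹ * MvPolynomial.C ((-1:ℚ)^i) *
        MvPolynomial.C (((j+1).choose i : ℚ)) := by
    rw [← map_mul, ← map_mul, ← map_mul]
    congr 1
    rw [Nat.cast_choose ℚ (show 2 ≤ i + 2 by omega), Nat.cast_choose ℚ hi', wq,
      show i + 2 - 2 = i by omega, Nat.factorial_two, show j + 3 - (i+1+1) = j + 1 - i by omega]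
    have h1 : (i.factorial : ℚ) ≠ 0 := Nat.cast_ne_zero.mpr i.factorial_ne_zero
    have h2 : (((i+2)).factorial : ℚ) ≠ 0 := Nat.cast_ne_zero.mpr (i+2).factorial_ne_zero
    have h3 : (((j+1)).factorial : ℚ) ≠ 0 := Nat.cast_ne_zero.mpr (j+1).factorial_ne_zero
    have h4 : (((j+1-i)).factorial : ℚ) ≠ 0 := Nat.cast_ne_zero.mpr (j+1-i).factorial_ne_zero
    have h5 : ((-1:ℚ))^(i+1+1) = (-1)^i := by rw [pow_succ, pow_succ]; ring
    rw [h5]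
    field_simp
    norm_num
  rw [A2, B1, negpow, ← MvPolynomial.C_eq_coe_nat,
    show i + 1 + 1 - 1 = i + 1 by omega, show i + 1 + 1 = i + 2 from rfl,
    show j + 3 - (i + 2) = (j + 1 - i) by omega]
  push_cast
  linear_combination (-((Xm 1)^(i+1) * (Xm 0 - Xm 1)^(j+1-i))) * key

lemma totdeg_X0 : (Xm 0 : MvPolynomial (Fin 2) ℚ).totalDegree ≤ 1 :=
  le_of_eq (MvPolynomial.totalDegree_X _)

lemma totdeg_Y : (Xm 1 : MvPolynomial (Fin 2) ℚ).totalDegree ≤ 1 :=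
  le_of_eq (MvPolynomial.totalDegree_X _)

lemma totdeg_Z : (Xm 0 - Xm 1 : MvPolynomial (Fin 2) ℚ).totalDegree ≤ 1 := by
  refine le_trans (MvPolynomial.totalDegree_sub _ _) ?_
  simp [MvPolynomial.totalDegree_X]

lemma degA1 (s : ℕ) : (A1 s).totalDegree ≤ s := by
  refine le_trans (MvPolynomial.totalDegree_pow _ _) ?_
  have := totdeg_Y
  calc s * (Xm 1 : MvPolynomial (Fin 2) ℚ).totalDegree ≤ s * 1 := Nat.mul_le_mul_left s this
    _ = s := by omega

lemma degA2 (s : ℕ) : (A2 s).totalDegree ≤ s - 1 := by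
  rw [A2, neg_mul]
  rw [MvPolynomial.totalDegree_neg]
  refine le_trans (MvPolynomial.totalDegree_mul _ _) ?_
  rw [MvPolynomial.totalDegree_C]
  refine le_trans ?_ (le_refl (s-1))
  simpa using le_trans (MvPolynomial.totalDegree_pow _ _)
    (by have := totdeg_Y;
        calc (s-1) * (Xm 1 : MvPolynomial (Fin 2) ℚ).totalDegree ≤ (s-1) * 1 := Nat.mul_le_mul_left _ this
          _ = s - 1 := by omega)

lemma degA3 (s : ℕ) : (A3 s).totalDegree ≤ s - 2 :=
  le_trans (aeval_totalDegree_le _ totdeg_Y _) (ee_natDegree s)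

lemma degB1 (k s : ℕ) : (B1 k s).totalDegree ≤ k - s := by
  refine le_trans (MvPolynomial.totalDegree_pow _ _) ?_
  have := totdeg_Z
  calc (k-s) * (Xm 0 - Xm 1 : MvPolynomial (Fin 2) ℚ).totalDegree ≤ (k-s) * 1 := Nat.mul_le_mul_left _ this
    _ = k - s := by omega

lemma degB2 (k s : ℕ) : (B2 k s).totalDegree ≤ k - s - 1 := by
  rw [B2, neg_mul, MvPolynomial.totalDegree_neg]
  refine le_trans (MvPolynomial.totalDegree_mul _ _) ?_
  rw [MvPolynomial.totalDegree_C]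
  simpa using le_trans (MvPolynomial.totalDegree_pow _ _)
    (by have := totdeg_Z
        calc (k-s-1) * (Xm 0 - Xm 1 : MvPolynomial (Fin 2) ℚ).totalDegree ≤ (k-s-1) * 1 := Nat.mul_le_mul_left _ this
          _ = k - s - 1 := by omega)

lemma degB3 (k s : ℕ) : (B3 k s).totalDegree ≤ k - s - 2 := by
  refine le_trans (aeval_totalDegree_le _ totdeg_Z _) ?_
  have := ee_natDegree (k - s)
  omega

lemma zeroA2 {s : ℕ} (h : s ≤ 1) : A2 s = 0 := by
  have : s.choose 2 = 0 := Nat.choose_eq_zero_of_lt (by omega)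
  simp [A2, this]

lemma zeroA3 {s : ℕ} (h : s ≤ 1) : A3 s = 0 := by
  rw [A3, ee_zero h, map_zero]

lemma zeroB2 {k s : ℕ} (h : k - 1 ≤ s) : B2 k s = 0 := by
  have : (k - s).choose 2 = 0 := Nat.choose_eq_zero_of_lt (by omega)
  simp [B2, this]

lemma zeroB3 {k s : ℕ} (h : k - 1 ≤ s) : B3 k s = 0 := by
  rw [B3, ee_zero (show k - s ≤ 1 by omega), map_zero]

lemma degmul {a b : MvPolynomial (Fin 2) ℚ} {da db d : ℕ} (ha : a.totalDegree ≤ da)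
    (hb : b.totalDegree ≤ db) (h : da + db ≤ d) : (a * b).totalDegree ≤ d :=
  le_trans (MvPolynomial.totalDegree_mul _ _) (le_trans (Nat.add_le_add ha hb) h)

lemma degGG (k s : ℕ) (hk : 3 ≤ k) (hs : s ≤ k) : (GG k s).totalDegree ≤ k - 2 := by
  have t1 : (A2 s * B2 k s).totalDegree ≤ k - 2 := by
    by_cases h0 : s ≤ 1
    · simp [zeroA2 h0]
    by_cases h1 : k - 1 ≤ s
    · simp [zeroB2 h1]
    exact degmul (degA2 s) (degB2 k s) (by omega)
  have t2 : (A1 s * B3 k s).totalDegree ≤ k - 2 := by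
    by_cases h1 : k - 1 ≤ s
    · simp [zeroB3 h1]
    exact degmul (degA1 s) (degB3 k s) (by omega)
  have t3 : (A2 s * B3 k s).totalDegree ≤ k - 2 := by
    by_cases h1 : k - 1 ≤ s
    · simp [zeroB3 h1]
    exact degmul (degA2 s) (degB3 k s) (by omega)
  have t4 : (A3 s * B1 k s).totalDegree ≤ k - 2 := by
    by_cases h0 : s ≤ 1
    · simp [zeroA3 h0]
    exact degmul (degA3 s) (degB1 k s) (by omega)
  have t5 : (A3 s * B2 k s).totalDegree ≤ k - 2 := by
    by_cases h0 : s ≤ 1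
    · simp [zeroA3 h0]
    exact degmul (degA3 s) (degB2 k s) (by omega)
  have t6 : (A3 s * B3 k s).totalDegree ≤ k - 2 := by
    by_cases h0 : s ≤ 1
    · simp [zeroA3 h0]
    exact degmul (degA3 s) (degB3 k s) (by omega)
  rw [GG]
  refine le_trans (MvPolynomial.totalDegree_add _ _) (max_le (le_trans (MvPolynomial.totalDegree_add _ _) (max_le (le_trans (MvPolynomial.totalDegree_add _ _) (max_le (le_trans (MvPolynomial.totalDegree_add _ _) (max_le (le_trans (MvPolynomial.totalDegree_add _ _) (max_le t1 t2)) t3)) t4)) t5)) t6)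

lemma sumG (k : ℕ) (hk : 3 ≤ k) :
    (∑ s ∈ range (k+1), MvPolynomial.C (wq k s) * GG k s).totalDegree ≤ k - 2 := by
  refine le_trans (MvPolynomial.totalDegree_finset_sum _ _) ?_
  refine Finset.sup_le fun s hs => ?_
  have hs' : s ≤ k := by have := Finset.mem_range.mp hs; omega
  refine degmul (le_of_eq (MvPolynomial.totalDegree_C _)) (degGG k s hk hs') (by omega)


lemma eval_polyaeval (v : Fin 2 → ℚ) (L : MvPolynomial (Fin 2) ℚ) (p : ℚ[X]) :
    MvPolynomial.eval v (Polynomial.aeval L p) = Polynomial.eval (MvPolynomial.eval v L) p := by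
  have h2 : (MvPolynomial.aeval v) (Polynomial.aeval L p)
      = MvPolynomial.eval v (Polynomial.aeval L p) := by
    rw [← MvPolynomial.coe_aeval_eq_eval]; rfl
  have h3 : (MvPolynomial.aeval v) L = MvPolynomial.eval v L := by
    rw [← MvPolynomial.coe_aeval_eq_eval]; rfl
  rw [← h2, ← Polynomial.aeval_algHom_apply (MvPolynomial.aeval v) L p, h3]
  exact congrFun (Polynomial.coe_aeval_eq_eval _) p

lemma eval_term (k s n m : ℕ) (hmn : m ≤ n) :
    MvPolynomial.eval ![(n:ℚ), (m:ℚ)] (MvPolynomial.C (wq k s) *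
      (Polynomial.aeval (Xm 1 : MvPolynomial (Fin 2) ℚ) (descPochhammer ℚ s) *
       Polynomial.aeval (Xm 0 - Xm 1 : MvPolynomial (Fin 2) ℚ) (descPochhammer ℚ (k-s)))) =
    (-1)^s * (m.choose s : ℚ) * ((n-m).choose (k-s) : ℚ) := by
  rw [map_mul, map_mul, MvPolynomial.eval_C, eval_polyaeval, eval_polyaeval]
  have hY : MvPolynomial.eval ![(n:ℚ),(m:ℚ)] (Xm 1 : MvPolynomial (Fin 2) ℚ) = (m:ℚ) := by simp
  have hZ : MvPolynomial.eval ![(n:ℚ),(m:ℚ)] (Xm 0 - Xm 1 : MvPolynomial (Fin 2) ℚ)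
      = ((n - m : ℕ) : ℚ) := by rw [Nat.cast_sub hmn]; simp
  rw [hY, hZ, descPochhammer_eval_eq_descFactorial, descPochhammer_eval_eq_descFactorial, wq]
  have e1 : ((m.descFactorial s : ℕ) : ℚ) = s.factorial * m.choose s := by
    rw [Nat.descFactorial_eq_factorial_mul_choose]; push_cast; ring
  have e2 : (((n-m).descFactorial (k-s) : ℕ) : ℚ)
      = (k-s).factorial * ((n-m).choose (k-s)) := by
    rw [Nat.descFactorial_eq_factorial_mul_choose]; push_cast; ring
  rw [e1, e2]
  have h1 : (s.factorial : ℚ) ≠ 0 := Nat.cast_ne_zero.mpr s.factorial_ne_zero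
  have h2 : ((k-s).factorial : ℚ) ≠ 0 := Nat.cast_ne_zero.mpr (k-s).factorial_ne_zero
  field_simp

lemma hQdecomp (k : ℕ) (hk : 3 ≤ k) :
    ∑ s ∈ Finset.range (k+1), MvPolynomial.C (wq k s) *
      (Polynomial.aeval (Xm 1 : MvPolynomial (Fin 2) ℚ) (descPochhammer ℚ s) *
       Polynomial.aeval (Xm 0 - Xm 1 : MvPolynomial (Fin 2) ℚ) (descPochhammer ℚ (k-s))) =
    MvPolynomial.C ((k.factorial : ℚ))⁻¹ * (Xm 0 - 2 * Xm 1)^k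
      - MvPolynomial.C ((2 * ((k-2).factorial) : ℚ))⁻¹ * (Xm 0 * (Xm 0 - 2 * Xm 1)^(k-2))
      + ∑ s ∈ Finset.range (k+1), MvPolynomial.C (wq k s) * GG k s := by
  have hsplit : ∀ s ∈ Finset.range (k+1),
      MvPolynomial.C (wq k s) *
        (Polynomial.aeval (Xm 1 : MvPolynomial (Fin 2) ℚ) (descPochhammer ℚ s) *
         Polynomial.aeval (Xm 0 - Xm 1 : MvPolynomial (Fin 2) ℚ) (descPochhammer ℚ (k-s))) =
      MvPolynomial.C (wq k s) * (A1 s * B1 k s)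
        + (MvPolynomial.C (wq k s) * (A1 s * B2 k s)
            + MvPolynomial.C (wq k s) * (A2 s * B1 k s))
        + MvPolynomial.C (wq k s) * GG k s := by
    intro s _
    rw [decompA, decompB, GG]
    ring
  rw [Finset.sum_congr rfl hsplit, Finset.sum_add_distrib, Finset.sum_add_distrib,
    Finset.sum_add_distrib, sum1 k hk, sumB k hk, sumA k hk]
  ring

end OmwAux

/-- `ω_{n,m,k} = (n−2m)^k/k! − n(n−2m)^{k−2}/(2(k−2)!) + P_k(n,m)` where `P_k`
is a polynomial in two variables of total degree at most `k−2`. -/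
theorem omegaW_expansion (k : ℕ) (hk : 3 ≤ k) :
    ∃ P : MvPolynomial (Fin 2) ℚ, P.totalDegree ≤ k - 2 ∧
      ∀ n m : ℕ, m ≤ n →
        (omegaW n m k : ℚ) =
          ((n : ℚ) - 2 * m) ^ k / (k.factorial : ℚ)
            - (n : ℚ) * ((n : ℚ) - 2 * m) ^ (k - 2) / (2 * ((k - 2).factorial : ℚ))
            + MvPolynomial.eval ![(n : ℚ), (m : ℚ)] P := by
  refine ⟨∑ s ∈ Finset.range (k+1), MvPolynomial.C (OmwAux.wq k s) * OmwAux.GG k s,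
    OmwAux.sumG k hk, ?_⟩
  intro n m hmn
  have hω : (omegaW n m k : ℚ) = MvPolynomial.eval ![(n:ℚ),(m:ℚ)]
      (∑ s ∈ Finset.range (k+1), MvPolynomial.C (OmwAux.wq k s) *
        (Polynomial.aeval (MvPolynomial.X 1 : MvPolynomial (Fin 2) ℚ) (descPochhammer ℚ s) *
         Polynomial.aeval (MvPolynomial.X 0 - MvPolynomial.X 1 : MvPolynomial (Fin 2) ℚ)
           (descPochhammer ℚ (k-s)))) := by
    rw [omegaW, map_sum]
    push_cast
    exact Finset.sum_congr rfl fun s _ => (OmwAux.eval_term k s n m hmn).symm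
  rw [hω, OmwAux.hQdecomp k hk]
  simp only [map_add, map_sub, map_mul, map_pow, map_ofNat, MvPolynomial.eval_C,
    MvPolynomial.eval_X, Matrix.cons_val_zero, Matrix.cons_val_one, Matrix.head_cons]
  have h3 : (k.factorial : ℚ) ≠ 0 := Nat.cast_ne_zero.mpr k.factorial_ne_zero
  have h4 : ((k-2).factorial : ℚ) ≠ 0 := Nat.cast_ne_zero.mpr (k-2).factorial_ne_zero
  field_simp
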